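/- For any integer p ≥ 2, there exist a constant c > 0 and a natural number n₀ such that for all n ≥ n₀, r(K_{n,n}, K_{p,p}, p² - 2p + 2) ≥ c·n^{1 - 1/p}. -/

import Mathlib

open Finset

-- Auxiliary development for the proof.
namespace EGBip

attribute [local instance] Classical.propDecidable

variable {n : ℕ}

/-- Bipartite adjacency on `Fin n ⊕ Fin n` induced by an edge set. -/
def adj (E : Finset (Fin n × Fin n)) : Fin n ⊕ Fin n → Fin n ⊕ Fin n → Prop
  | .inl a, .inr b => (a, b) ∈ E
  | .inr b, .inl a => (a, b) ∈ E
  | .inl _, .inl _ => False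
  | .inr _, .inr _ => False

lemma adj_symm {E : Finset (Fin n × Fin n)} {x y} (h : adj E x y) : adj E y x := by
  cases x <;> cases y <;> simp [adj] at h ⊢ <;> exact h

lemma adj_isLeft {E : Finset (Fin n × Fin n)} {x y} (h : adj E x y) :
    y.isLeft = !x.isLeft := by
  cases x <;> cases y <;> simp [adj] at h ⊢

lemma adj_irrefl {E : Finset (Fin n × Fin n)} {x} (h : adj E x x) : False := by
  cases x <;> exact h

lemma adj_cases {E : Finset (Fin n × Fin n)} {x y} (h : adj E x y) :
    ∃ a b, (a, b) ∈ E ∧ ((x = .inl a ∧ y = .inr b) ∨ (x = .inr b ∧ y = .inl a)) := by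
  cases x with
  | inl a =>
    cases y with
    | inl a' => exact h.elim
    | inr b => exact ⟨a, b, h, Or.inl ⟨rfl, rfl⟩⟩
  | inr b =>
    cases y with
    | inl a => exact ⟨a, b, h, Or.inr ⟨rfl, rfl⟩⟩
    | inr b' => exact h.elim

/-- Ball of radius `i` around `r` in the bipartite graph `E`. -/
noncomputable def ball (E : Finset (Fin n × Fin n)) (r : Fin n ⊕ Fin n) : ℕ → Finset (Fin n ⊕ Fin n)
  | 0 => {r}
  | i + 1 => ball E r i ∪ univ.filter (fun v => ∃ u ∈ ball E r i, adj E u v)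

/-- Sphere (layer) of radius `i`. -/
noncomputable def lay (E : Finset (Fin n × Fin n)) (r : Fin n ⊕ Fin n) : ℕ → Finset (Fin n ⊕ Fin n)
  | 0 => {r}
  | i + 1 => ball E r (i + 1) \ ball E r i

lemma ball_succ_of_adj {E : Finset (Fin n × Fin n)} {r u v} {i : ℕ}
    (hu : u ∈ ball E r i) (h : adj E u v) : v ∈ ball E r (i + 1) := by
  simp only [ball, mem_union, mem_filter, mem_univ, true_and]
  exact Or.inr ⟨u, hu, h⟩

lemma ball_subset_succ {E : Finset (Fin n × Fin n)} {r} (i : ℕ) :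
    ball E r i ⊆ ball E r (i + 1) := by
  intro v hv; simp only [ball, mem_union]; exact Or.inl hv

lemma ball_mono {E : Finset (Fin n × Fin n)} {r} {i j : ℕ} (h : i ≤ j) :
    ball E r i ⊆ ball E r j := by
  induction j with
  | zero => simpa [Nat.le_zero.mp h]
  | succ j ih =>
    rcases Nat.lt_or_ge i (j+1) with h' | h'
    · exact (ih (Nat.lt_succ_iff.mp h')).trans (ball_subset_succ j)
    · have : i = j + 1 := le_antisymm h h'
      subst this; exact subset_rfl

lemma lay_subset_ball {E : Finset (Fin n × Fin n)} {r} (i : ℕ) :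
    lay E r i ⊆ ball E r i := by
  cases i with
  | zero => exact subset_rfl
  | succ i => exact sdiff_subset

lemma mem_lay_succ {E : Finset (Fin n × Fin n)} {r v} {i : ℕ} :
    v ∈ lay E r (i + 1) ↔ v ∈ ball E r (i + 1) ∧ v ∉ ball E r i := by
  simp [lay, mem_sdiff]

lemma not_mem_ball_of_lay {E : Finset (Fin n × Fin n)} {r v} {i j : ℕ}
    (hv : v ∈ lay E r j) (hij : i < j) : v ∉ ball E r i := by
  cases j with
  | zero => omega
  | succ j =>
    intro h
    exact (mem_lay_succ.mp hv).2 (ball_mono (by omega) h)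

lemma exists_parent {E : Finset (Fin n × Fin n)} {r v} {i : ℕ}
    (hv : v ∈ lay E r (i + 1)) : ∃ u ∈ lay E r i, adj E u v := by
  obtain ⟨h1, h2⟩ := mem_lay_succ.mp hv
  simp only [ball, mem_union, mem_filter, mem_univ, true_and] at h1
  rcases h1 with h | ⟨u, hu, hadj⟩
  · exact absurd h h2
  · cases i with
    | zero => exact ⟨u, hu, hadj⟩
    | succ i =>
      by_cases hu' : u ∈ ball E r i
      · exact absurd (ball_succ_of_adj hu' hadj) h2
      · exact ⟨u, mem_lay_succ.mpr ⟨hu, hu'⟩, hadj⟩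

lemma ball_cases {E : Finset (Fin n × Fin n)} {r v} {i : ℕ}
    (hv : v ∈ ball E r i) : ∃ j ≤ i, v ∈ lay E r j := by
  induction i with
  | zero => exact ⟨0, le_refl 0, hv⟩
  | succ i ih =>
    by_cases h : v ∈ ball E r i
    · obtain ⟨j, hj, hl⟩ := ih h
      exact ⟨j, by omega, hl⟩
    · exact ⟨i + 1, le_refl _, mem_lay_succ.mpr ⟨hv, h⟩⟩

lemma lay_side {E : Finset (Fin n × Fin n)} {r v} {i : ℕ} (hr : r.isLeft = true)
    (hv : v ∈ lay E r i) : v.isLeft = decide (Even i) := by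
  induction i generalizing v with
  | zero =>
    simp only [lay, mem_singleton] at hv
    subst hv; simpa using hr
  | succ i ih =>
    obtain ⟨u, hu, hadj⟩ := exists_parent hv
    rw [adj_isLeft hadj, ih hu]
    by_cases h : Even i <;> simp [Nat.even_add_one, h]

lemma lay_eq_of_mem {E : Finset (Fin n × Fin n)} {r v} {i j : ℕ}
    (hi : v ∈ lay E r i) (hj : v ∈ lay E r j) : i = j := by
  rcases Nat.lt_trichotomy i j with h | h | h
  · exact absurd (lay_subset_ball i hi) (not_mem_ball_of_lay hj h)
  · exact h
  · exact absurd (lay_subset_ball j hj) (not_mem_ball_of_lay hi h)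

/-- Key: a neighbor of a layer-`(i+1)` vertex that lies in `ball i` is in layer `i`. -/
lemma adj_mem_ball_lay {E : Finset (Fin n × Fin n)} {r u v} {i : ℕ} (hr : r.isLeft = true)
    (hu : u ∈ lay E r (i + 1)) (hadj : adj E u v) (hv : v ∈ ball E r (i + 1)) :
    v ∈ lay E r i := by
  obtain ⟨j, hj, hl⟩ := ball_cases hv
  have hub : u ∈ ball E r (j + 1) := ball_succ_of_adj (lay_subset_ball j hl) (adj_symm hadj)
  have hji : ¬ (j + 1 ≤ i) := fun h => (mem_lay_succ.mp hu).2 (ball_mono h hub)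
  -- j = i or j = i+1; exclude j = i+1 by parity
  have hne : j ≠ i + 1 := by
    intro h; subst h
    have h1 := lay_side hr hu
    have h2 := lay_side hr hl
    have := adj_isLeft hadj
    rw [h1, h2] at this
    cases h : decide (Even (i+1)) <;> rw [h] at this <;> simp at this
  have : j = i := by omega
  rwa [this] at hl

section Chunk2
variable {n : ℕ}

lemma expansion_step {E : Finset (Fin n × Fin n)} {r} {p d i : ℕ} (hr : r.isLeft = true)
    (hip : i + 1 ≤ p)
    (hdeg : ∀ x ∈ ball E r p, d + 1 ≤ (univ.filter (fun y => adj E x y)).card)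
    (H2 : ∀ j, 1 ≤ j → j ≤ p → ∀ v ∈ lay E r j,
      ((lay E r (j-1)).filter (fun u => adj E u v)).card ≤ 1) :
    d * (lay E r i).card ≤ (lay E r (i+1)).card := by
  have hlow : ∀ u ∈ lay E r i, d ≤ ((lay E r (i+1)).filter (fun v => adj E u v)).card := by
    intro u hu
    set N := univ.filter (fun y => adj E u y) with hN
    have hNd : d + 1 ≤ N.card :=
      hdeg u (ball_mono (by omega) (lay_subset_ball i hu))
    have hsub : N \ ball E r i ⊆ (lay E r (i+1)).filter (fun v => adj E u v) := by
      intro v hv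
      rw [mem_sdiff, hN, mem_filter] at hv
      obtain ⟨⟨-, hadj⟩, hnb⟩ := hv
      refine mem_filter.mpr ⟨mem_lay_succ.mpr ⟨?_, hnb⟩, hadj⟩
      exact ball_succ_of_adj (lay_subset_ball i hu) hadj
    have hint : (N ∩ ball E r i).card ≤ 1 := by
      cases i with
      | zero =>
        have : N ∩ ball E r 0 = ∅ := by
          rw [eq_empty_iff_forall_notMem]
          intro v hv
          rw [mem_inter, hN, mem_filter] at hv
          obtain ⟨⟨-, hadj⟩, hb⟩ := hv
          simp only [ball, mem_singleton] at hb
          have : u = r := by simpa [lay] using hu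
          subst hb; subst this
          exact adj_irrefl hadj
        simp [this]
      | succ i' =>
        have hsub2 : N ∩ ball E r (i' + 1) ⊆
            (lay E r i').filter (fun w => adj E w u) := by
          intro v hv
          rw [mem_inter, hN, mem_filter] at hv
          obtain ⟨⟨-, hadj⟩, hb⟩ := hv
          exact mem_filter.mpr ⟨adj_mem_ball_lay hr hu hadj hb, adj_symm hadj⟩
        calc (N ∩ ball E r (i'+1)).card
            ≤ ((lay E r i').filter (fun w => adj E w u)).card := card_le_card hsub2
          _ ≤ 1 := by
              have := H2 (i'+1) (by omega) (by omega) u hu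
              simpa using this
    have := card_sdiff_add_card_inter N (ball E r i)
    have h2 : d ≤ (N \ ball E r i).card := by omega
    exact h2.trans (card_le_card hsub)
  have hupp : ∀ v ∈ lay E r (i+1), ((lay E r i).filter (fun u => adj E u v)).card ≤ 1 := by
    intro v hv
    have := H2 (i+1) (by omega) hip v hv
    simpa using this
  have hcomm : ∑ u ∈ lay E r i, ((lay E r (i+1)).filter (fun v => adj E u v)).card
      = ∑ v ∈ lay E r (i+1), ((lay E r i).filter (fun u => adj E u v)).card := by
    simp only [Finset.card_filter]
    rw [Finset.sum_comm]
  calc d * (lay E r i).card = ∑ _u ∈ lay E r i, d := by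
        rw [Finset.sum_const, smul_eq_mul, mul_comm]
    _ ≤ ∑ u ∈ lay E r i, ((lay E r (i+1)).filter (fun v => adj E u v)).card :=
        Finset.sum_le_sum hlow
    _ = ∑ v ∈ lay E r (i+1), ((lay E r i).filter (fun u => adj E u v)).card := hcomm
    _ ≤ ∑ _v ∈ lay E r (i+1), 1 := Finset.sum_le_sum hupp
    _ = (lay E r (i+1)).card := by simp

lemma expansion {E : Finset (Fin n × Fin n)} {r} {p d : ℕ} (hr : r.isLeft = true)
    (hdeg : ∀ x ∈ ball E r p, d + 1 ≤ (univ.filter (fun y => adj E x y)).card)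
    (H2 : ∀ j, 1 ≤ j → j ≤ p → ∀ v ∈ lay E r j,
      ((lay E r (j-1)).filter (fun u => adj E u v)).card ≤ 1) :
    ∀ i ≤ p, d ^ i ≤ (lay E r i).card := by
  intro i
  induction i with
  | zero => intro _; simp [lay]
  | succ i ih =>
    intro hip
    calc d ^ (i+1) = d * d ^ i := by ring
      _ ≤ d * (lay E r i).card := Nat.mul_le_mul_left d (ih (by omega))
      _ ≤ (lay E r (i+1)).card := expansion_step hr hip hdeg H2

end Chunk2
section Chunk3
variable {n : ℕ}

/-- The level (distance from root) of a vertex. -/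
noncomputable def lvl (E : Finset (Fin n × Fin n)) (r v : Fin n ⊕ Fin n) : ℕ :=
  if h : ∃ i, v ∈ ball E r i then Nat.find h else 0

lemma lvl_eq {E : Finset (Fin n × Fin n)} {r v} {i : ℕ} (hv : v ∈ lay E r i) :
    lvl E r v = i := by
  have h : ∃ j, v ∈ ball E r j := ⟨i, lay_subset_ball i hv⟩
  rw [lvl, dif_pos h]
  rw [Nat.find_eq_iff]
  refine ⟨lay_subset_ball i hv, fun j hj => not_mem_ball_of_lay hv hj⟩

/-- A chain (path) from the root to a vertex in layer `i`. -/
lemma exists_chain {E : Finset (Fin n × Fin n)} {r v} {i : ℕ} (hv : v ∈ lay E r i) :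
    ∃ f : ℕ → Fin n ⊕ Fin n, f i = v ∧ (∀ m ≤ i, f m ∈ lay E r m) ∧
      (∀ m < i, adj E (f m) (f (m + 1))) := by
  induction i generalizing v with
  | zero =>
    exact ⟨fun _ => v, rfl, fun m hm => by rw [Nat.le_zero.mp hm]; exact hv,
      fun m hm => by omega⟩
  | succ i ih =>
    obtain ⟨u, hu, hadj⟩ := exists_parent hv
    obtain ⟨g, hg1, hg2, hg3⟩ := ih hu
    refine ⟨fun m => if m = i + 1 then v else g m, by simp, ?_, ?_⟩
    · intro m hm
      by_cases h : m = i + 1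
      · subst h; simpa
      · simp only [if_neg h]; exact hg2 m (by omega)
    · intro m hm
      by_cases h : m = i
      · simp only [if_neg (by omega : ¬ m = i + 1), if_pos (show m + 1 = i + 1 by omega)]
        rw [h, hg1]
        exact hadj
      · simp only [if_neg (by omega : ¬ m = i + 1), if_neg (by omega : ¬ m + 1 = i + 1)]
        exact hg3 m (by omega)

/-- Extract the (left, right) pair of an adjacent pair of vertices. -/
def toPair : (Fin n ⊕ Fin n) → (Fin n ⊕ Fin n) → Fin n × Fin n
  | .inl a, y => (a, Sum.elim id id y)
  | .inr b, y => (Sum.elim id id y, b)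

lemma toPair_mem {E : Finset (Fin n × Fin n)} {x y} (h : adj E x y) :
    toPair x y ∈ E := by
  rcases adj_cases h with ⟨a, b, hab, ⟨hx, hy⟩ | ⟨hx, hy⟩⟩ <;> subst hx <;> subst hy <;>
    simpa [toPair]

lemma toPair_ends {E : Finset (Fin n × Fin n)} {x y} (h : adj E x y) :
    (Sum.inl (toPair x y).1 = x ∧ Sum.inr (toPair x y).2 = y) ∨
    (Sum.inl (toPair x y).1 = y ∧ Sum.inr (toPair x y).2 = x) := by
  rcases adj_cases h with ⟨a, b, hab, ⟨hx, hy⟩ | ⟨hx, hy⟩⟩ <;> subst hx <;> subst hy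
  · exact Or.inl ⟨rfl, rfl⟩
  · exact Or.inr ⟨rfl, rfl⟩

/-- Count of even numbers in `range m`. -/
lemma card_range_even (m : ℕ) :
    ((Finset.range m).filter (fun x => x % 2 = 0)).card = (m + 1) / 2 := by
  induction m with
  | zero => simp
  | succ m ih =>
    rw [Finset.range_add_one, Finset.filter_insert]
    by_cases h : m % 2 = 0
    · rw [if_pos h, Finset.card_insert_of_notMem (by simp)]
      omega
    · rw [if_neg h]
      omega

lemma card_range_odd (m : ℕ) :
    ((Finset.range m).filter (fun x => x % 2 = 1)).card = m / 2 := by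
  induction m with
  | zero => simp
  | succ m ih =>
    rw [Finset.range_add_one, Finset.filter_insert]
    by_cases h : m % 2 = 1
    · rw [if_pos h, Finset.card_insert_of_notMem (by simp)]
      omega
    · rw [if_neg h]
      omega

end Chunk3
section Chunk4
variable {n : ℕ}

lemma grow {E : Finset (Fin n × Fin n)} {p d : ℕ} (hpd : p ≤ d)
    (hdegL : ∀ a b, (a, b) ∈ E → d + 1 ≤ (E.filter fun e => e.1 = a).card)
    (hdegR : ∀ a b, (a, b) ∈ E → d + 1 ≤ (E.filter fun e => e.2 = b).card) :
    ∀ t (SL SR : Finset (Fin n)) (F : Finset (Fin n × Fin n)),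
      F.Nonempty → F ⊆ E → F ⊆ SL ×ˢ SR →
      (∀ a ∈ SL, ∃ b, (a, b) ∈ F) → (∀ b ∈ SR, ∃ a, (a, b) ∈ F) →
      SL.card ≤ p → SR.card ≤ p → SL.card + SR.card + t = 2 * p →
      SL.card + SR.card ≤ F.card →
      ∃ (A B : Finset (Fin n)) (F' : Finset (Fin n × Fin n)),
        A.card = p ∧ B.card = p ∧ F' ⊆ E ∧ F' ⊆ A ×ˢ B ∧ 2 * p ≤ F'.card := by
  intro t
  induction t with
  | zero =>
    intro SL SR F _ hFE hFP _ _ hL hR hsum hcard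
    have h1 : SL.card = p := by omega
    have h2 : SR.card = p := by omega
    exact ⟨SL, SR, F, h1, h2, hFE, hFP, by omega⟩
  | succ t ih =>
    intro SL SR F hF hFE hFP hincL hincR hL hR hsum hcard
    by_cases hLp : SL.card < p
    · -- grow the left side
      have hstep : ∃ a b, a ∉ SL ∧ b ∈ SR ∧ (a, b) ∈ E := by
        by_contra hcon
        push_neg at hcon
        obtain ⟨e, he⟩ := hF
        have heP := hFP he
        rw [mem_product] at heP
        obtain ⟨a', ha'⟩ := hincR e.2 heP.2
        have hd := hdegR a' e.2 (hFE ha')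
        have hsub : E.filter (fun e' => e'.2 = e.2) ⊆ SL.image (fun a => (a, e.2)) := by
          intro e' he'
          rw [mem_filter] at he'
          have ha : e'.1 ∈ SL := by
            by_contra hna
            exact hcon e'.1 e'.2 hna (he'.2 ▸ heP.2) he'.1
          rw [Finset.mem_image]
          exact ⟨e'.1, ha, by rw [← he'.2]⟩
        have := (card_le_card hsub).trans Finset.card_image_le
        omega
      obtain ⟨a, b, haSL, hbSR, habE⟩ := hstep
      have hnotF : (a, b) ∉ F := fun h => haSL (by simpa using (mem_product.mp (hFP h)).1)
      refine ih (insert a SL) SR (insert (a, b) F) ⟨(a,b), mem_insert_self _ _⟩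
        ?_ ?_ ?_ ?_ ?_ hR ?_ ?_
      · intro e he
        rcases mem_insert.mp he with h | h
        · subst h; exact habE
        · exact hFE h
      · intro e he
        rcases mem_insert.mp he with h | h
        · subst h; rw [mem_product]; exact ⟨mem_insert_self _ _, hbSR⟩
        · have := mem_product.mp (hFP h)
          rw [mem_product]
          exact ⟨mem_insert_of_mem this.1, this.2⟩
      · intro a' ha'
        rcases mem_insert.mp ha' with h | h
        · subst h; exact ⟨b, mem_insert_self _ _⟩
        · obtain ⟨b', hb'⟩ := hincL a' h
          exact ⟨b', mem_insert_of_mem hb'⟩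
      · intro b' hb'
        obtain ⟨a', ha'⟩ := hincR b' hb'
        exact ⟨a', mem_insert_of_mem ha'⟩
      · rw [card_insert_of_notMem haSL]; omega
      · rw [card_insert_of_notMem haSL]; omega
      · rw [card_insert_of_notMem haSL, card_insert_of_notMem hnotF]; omega
    · -- grow the right side
      have hRp : SR.card < p := by omega
      have hstep : ∃ a b, a ∈ SL ∧ b ∉ SR ∧ (a, b) ∈ E := by
        by_contra hcon
        push_neg at hcon
        obtain ⟨e, he⟩ := hF
        have heP := hFP he
        rw [mem_product] at heP
        obtain ⟨b', hb'⟩ := hincL e.1 heP.1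
        have hd := hdegL e.1 b' (hFE hb')
        have hsub : E.filter (fun e' => e'.1 = e.1) ⊆ SR.image (fun b => (e.1, b)) := by
          intro e' he'
          rw [mem_filter] at he'
          have hb : e'.2 ∈ SR := by
            by_contra hnb
            exact hcon e'.1 e'.2 (he'.2 ▸ heP.1) hnb he'.1
          rw [Finset.mem_image]
          exact ⟨e'.2, hb, by rw [← he'.2]⟩
        have := (card_le_card hsub).trans Finset.card_image_le
        omega
      obtain ⟨a, b, haSL, hbSR, habE⟩ := hstep
      have hnotF : (a, b) ∉ F := fun h => hbSR (by simpa using (mem_product.mp (hFP h)).2)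
      refine ih SL (insert b SR) (insert (a, b) F) ⟨(a,b), mem_insert_self _ _⟩
        ?_ ?_ ?_ ?_ hL ?_ ?_ ?_
      · intro e he
        rcases mem_insert.mp he with h | h
        · subst h; exact habE
        · exact hFE h
      · intro e he
        rcases mem_insert.mp he with h | h
        · subst h; rw [mem_product]; exact ⟨haSL, mem_insert_self _ _⟩
        · have := mem_product.mp (hFP h)
          rw [mem_product]
          exact ⟨this.1, mem_insert_of_mem this.2⟩
      · intro a' ha'
        obtain ⟨b', hb'⟩ := hincL a' ha'
        exact ⟨b', mem_insert_of_mem hb'⟩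
      · intro b' hb'
        rcases mem_insert.mp hb' with h | h
        · subst h; exact ⟨a, mem_insert_self _ _⟩
        · obtain ⟨a', ha'⟩ := hincR b' h
          exact ⟨a', mem_insert_of_mem ha'⟩
      · rw [card_insert_of_notMem hbSR]; omega
      · rw [card_insert_of_notMem hbSR]; omega
      · rw [card_insert_of_notMem hbSR, card_insert_of_notMem hnotF]; omega

end Chunk4
section Chunk5a
variable {n : ℕ}

lemma ndeg_inl {E : Finset (Fin n × Fin n)} (a : Fin n) :
    (univ.filter (fun y => adj E (Sum.inl a) y)).card = (E.filter fun e => e.1 = a).card := by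
  have himg : univ.filter (fun y => adj E (Sum.inl a) y)
      = (E.filter fun e => e.1 = a).image (fun e => Sum.inr e.2) := by
    ext v
    cases v with
    | inl a' => rw [mem_filter]; simp [adj]
    | inr b =>
      simp only [mem_filter, mem_univ, true_and, Finset.mem_image]
      constructor
      · intro h; exact ⟨(a, b), ⟨h, rfl⟩, rfl⟩
      · rintro ⟨e, he, heq⟩
        have : e = (a, b) := by
          obtain ⟨e1, e2⟩ := e
          simp_all
        rw [this] at he
        exact he.1
  rw [himg]
  apply Finset.card_image_of_injOn
  intro e he e' he' heq
  simp only [Finset.coe_filter, Set.mem_setOf_eq] at he he'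
  obtain ⟨e1, e2⟩ := e; obtain ⟨e1', e2'⟩ := e'
  simp_all

lemma ndeg_inr {E : Finset (Fin n × Fin n)} (b : Fin n) :
    (univ.filter (fun y => adj E (Sum.inr b) y)).card = (E.filter fun e => e.2 = b).card := by
  have himg : univ.filter (fun y => adj E (Sum.inr b) y)
      = (E.filter fun e => e.2 = b).image (fun e => Sum.inl e.1) := by
    ext v
    cases v with
    | inr b' => rw [mem_filter]; simp [adj]
    | inl a =>
      simp only [mem_filter, mem_univ, true_and, Finset.mem_image]
      constructor
      · intro h; exact ⟨(a, b), ⟨h, rfl⟩, rfl⟩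
      · rintro ⟨e, he, heq⟩
        have : e = (a, b) := by
          obtain ⟨e1, e2⟩ := e
          simp_all
        rw [this] at he
        exact he.1
  rw [himg]
  apply Finset.card_image_of_injOn
  intro e he e' he' heq
  simp only [Finset.coe_filter, Set.mem_setOf_eq] at he he'
  obtain ⟨e1, e2⟩ := e; obtain ⟨e1', e2'⟩ := e'
  simp_all

end Chunk5a
section Chunk5b
variable {n : ℕ}

lemma exists_box {E : Finset (Fin n × Fin n)} {p d : ℕ} (hp : 2 ≤ p) (hpd : p ≤ d)
    (hE : E.Nonempty)
    (hdegL : ∀ a b, (a, b) ∈ E → d + 1 ≤ (E.filter fun e => e.1 = a).card)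
    (hdegR : ∀ a b, (a, b) ∈ E → d + 1 ≤ (E.filter fun e => e.2 = b).card)
    (h2n : 2 * n < d ^ p) :
    ∃ (A B : Finset (Fin n)) (F : Finset (Fin n × Fin n)),
      A.card = p ∧ B.card = p ∧ F ⊆ E ∧ F ⊆ A ×ˢ B ∧ 2 * p ≤ F.card := by
  obtain ⟨⟨a₀, b₀⟩, he₀⟩ := hE
  set r : Fin n ⊕ Fin n := Sum.inl a₀ with hrdef
  have hr : r.isLeft = true := rfl
  -- every vertex of a ball is incident to an edge
  have hinc : ∀ i, ∀ x ∈ ball E r i, ∃ y, adj E x y := by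
    intro i
    induction i with
    | zero =>
      intro x hx
      simp only [ball, mem_singleton] at hx
      subst hx
      exact ⟨Sum.inr b₀, he₀⟩
    | succ i ih =>
      intro x hx
      simp only [ball, mem_union, mem_filter, mem_univ, true_and] at hx
      rcases hx with hx | ⟨u, hu, hadj⟩
      · exact ih x hx
      · exact ⟨u, adj_symm hadj⟩
  have hdeg : ∀ x ∈ ball E r p, d + 1 ≤ (univ.filter (fun y => adj E x y)).card := by
    intro x hx
    obtain ⟨y, hy⟩ := hinc p x hx
    rcases adj_cases hy with ⟨a, b, habE, ⟨hx', hy'⟩ | ⟨hx', hy'⟩⟩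
    · subst hx'; rw [ndeg_inl]; exact hdegL a b habE
    · subst hx'; rw [ndeg_inr]; exact hdegR a b habE
  by_cases hH2 : ∀ j, 1 ≤ j → j ≤ p → ∀ v ∈ lay E r j,
      ((lay E r (j-1)).filter (fun u => adj E u v)).card ≤ 1
  · -- expansion: contradiction with the size of the vertex set
    exfalso
    have h1 := expansion hr hdeg hH2 p le_rfl
    have h2 : (lay E r p).card ≤ Fintype.card (Fin n ⊕ Fin n) := Finset.card_le_univ _
    rw [Fintype.card_sum, Fintype.card_fin] at h2
    omega
  · push_neg at hH2
    obtain ⟨j, hj1, hjp, v, hv, hcard2⟩ := hH2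
    obtain ⟨i, rfl⟩ : ∃ i, j = i + 1 := ⟨j - 1, by omega⟩
    rw [Nat.lt_iff_add_one_le] at hcard2
    have h2le : 2 ≤ ((lay E r (i+1-1)).filter (fun u => adj E u v)).card := by omega
    obtain ⟨u, hu, u', hu', huu'⟩ := Finset.one_lt_card.mp (by omega :
      1 < ((lay E r (i+1-1)).filter (fun u => adj E u v)).card)
    simp only [Nat.add_sub_cancel, mem_filter] at hu hu'
    obtain ⟨hulay, huadj⟩ := hu
    obtain ⟨hulay', huadj'⟩ := hu'
    -- i ≥ 1 : layer 0 is a singleton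
    have hi1 : 1 ≤ i := by
      by_contra h
      have : i = 0 := by omega
      subst this
      simp only [lay, mem_singleton] at hulay hulay'
      exact huu' (hulay.trans hulay'.symm)
    obtain ⟨f, hfi, hflay, hfadj⟩ := exists_chain hulay
    obtain ⟨f', hfi', hflay', hfadj'⟩ := exists_chain hulay'
    set T : Finset (Fin n ⊕ Fin n) :=
      (Finset.range (i+1)).image f ∪ (Finset.range (i+1)).image f' with hTdef
    set S : Finset (Fin n ⊕ Fin n) := insert v T with hSdef
    set Ftree : Finset (Fin n × Fin n) :=
      ((Finset.range i).image fun m => toPair (f m) (f (m+1))) ∪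
      ((Finset.range i).image fun m => toPair (f' m) (f' (m+1))) with hFtdef
    set F : Finset (Fin n × Fin n) :=
      insert (toPair u v) (insert (toPair u' v) Ftree) with hFdef
    set SL : Finset (Fin n) := univ.filter (fun a => Sum.inl a ∈ S) with hSLdef
    set SR : Finset (Fin n) := univ.filter (fun b => Sum.inr b ∈ S) with hSRdef
    clear_value T S Ftree F SL SR
    -- basic layer facts
    have hTlay : ∀ w ∈ T, ∃ m ≤ i, w ∈ lay E r m := by
      intro w hw
      rw [hTdef, mem_union] at hw
      rcases hw with hw | hw <;>
      · rw [Finset.mem_image] at hw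
        obtain ⟨m, hm, rfl⟩ := hw
        rw [Finset.mem_range] at hm
        first
        | exact ⟨m, by omega, hflay m (by omega)⟩
        | exact ⟨m, by omega, hflay' m (by omega)⟩
    have hvlvl : lvl E r v = i + 1 := lvl_eq hv
    have hTlvl : ∀ w ∈ T, lvl E r w ≤ i := by
      intro w hw
      obtain ⟨m, hm, hl⟩ := hTlay w hw
      rw [lvl_eq hl]; exact hm
    have hvT : v ∉ T := fun h => by have := hTlvl v h; omega
    have hScard : S.card = T.card + 1 := by
      rw [hSdef]; exact card_insert_of_notMem hvT
    -- F ⊆ E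
    have hFE : F ⊆ E := by
      intro e he
      rw [hFdef, mem_insert, mem_insert] at he
      rcases he with rfl | rfl | he
      · exact toPair_mem huadj
      · exact toPair_mem huadj'
      · rw [hFtdef, mem_union] at he
        rcases he with he | he <;>
        · rw [Finset.mem_image] at he
          obtain ⟨m, hm, rfl⟩ := he
          rw [Finset.mem_range] at hm
          first
          | exact toPair_mem (hfadj m hm)
          | exact toPair_mem (hfadj' m hm)
    -- ends of tree edges
    have hFtreeEnds : ∀ e ∈ Ftree,
        (Sum.inl e.1 ∈ T ∧ lvl E r (Sum.inl e.1) ≤ i) ∧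
        (Sum.inr e.2 ∈ T ∧ lvl E r (Sum.inr e.2) ≤ i) := by
      intro e he
      rw [hFtdef, mem_union] at he
      have key : ∀ (g : ℕ → Fin n ⊕ Fin n), (∀ m ≤ i, g m ∈ lay E r m) →
          (∀ m < i, adj E (g m) (g (m+1))) →
          (e ∈ (Finset.range i).image fun m => toPair (g m) (g (m+1))) →
          (Sum.inl e.1 ∈ (Finset.range (i+1)).image g ∧ lvl E r (Sum.inl e.1) ≤ i) ∧
          (Sum.inr e.2 ∈ (Finset.range (i+1)).image g ∧ lvl E r (Sum.inr e.2) ≤ i) := by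
        intro g hglay hgadj hmem
        rw [Finset.mem_image] at hmem
        obtain ⟨m, hm, rfl⟩ := hmem
        rw [Finset.mem_range] at hm
        have hadjm := hgadj m hm
        have h1 : g m ∈ (Finset.range (i+1)).image g :=
          Finset.mem_image.mpr ⟨m, Finset.mem_range.mpr (by omega), rfl⟩
        have h2 : g (m+1) ∈ (Finset.range (i+1)).image g :=
          Finset.mem_image.mpr ⟨m+1, Finset.mem_range.mpr (by omega), rfl⟩
        have hl1 : lvl E r (g m) = m := lvl_eq (hglay m (by omega))
        have hl2 : lvl E r (g (m+1)) = m + 1 := lvl_eq (hglay (m+1) (by omega))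
        rcases toPair_ends hadjm with ⟨ha, hb⟩ | ⟨ha, hb⟩
        · rw [ha, hb]; exact ⟨⟨h1, by omega⟩, ⟨h2, by omega⟩⟩
        · rw [ha, hb]; exact ⟨⟨h2, by omega⟩, ⟨h1, by omega⟩⟩
      rcases he with he | he
      · have := key f hflay hfadj he
        rw [hTdef]
        exact ⟨⟨mem_union_left _ this.1.1, this.1.2⟩, ⟨mem_union_left _ this.2.1, this.2.2⟩⟩
      · have := key f' hflay' hfadj' he
        rw [hTdef]
        exact ⟨⟨mem_union_right _ this.1.1, this.1.2⟩, ⟨mem_union_right _ this.2.1, this.2.2⟩⟩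
    -- the two special edges are new and distinct
    have hnew : ∀ w, adj E w v → toPair w v ∉ Ftree := by
      intro w hadj hmem
      have hends := hFtreeEnds _ hmem
      rcases toPair_ends hadj with ⟨ha, hb⟩ | ⟨ha, hb⟩
      · rw [hb] at hends; omega
      · rw [ha] at hends; omega
    have hulvl : lvl E r u = i := lvl_eq hulay
    have hulvl' : lvl E r u' = i := lvl_eq hulay'
    have hne2 : toPair u v ≠ toPair u' v := by
      intro heq
      rcases toPair_ends huadj with ⟨ha, hb⟩ | ⟨ha, hb⟩ <;>
        rcases toPair_ends huadj' with ⟨ha', hb'⟩ | ⟨ha', hb'⟩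
      · rw [heq] at ha; exact huu' (ha.symm.trans ha')
      · rw [heq] at ha
        have huv : u = v := ha.symm.trans ha'
        rw [huv, hvlvl] at hulvl; omega
      · rw [heq] at ha
        have huv : v = u' := ha.symm.trans ha'
        rw [← huv, hvlvl] at hulvl'; omega
      · rw [heq] at hb; exact huu' (hb.symm.trans hb')
    -- cardinality of F
    have hr0 : f 0 = r := by
      have := hflay 0 (by omega)
      simpa [lay] using this
    have hrT : r ∈ T := by
      rw [hTdef, mem_union]
      exact Or.inl (Finset.mem_image.mpr ⟨0, Finset.mem_range.mpr (by omega), hr0⟩)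
    -- surjection from tree edges onto T \ {r}
    have hsurj : T.erase r ⊆ Ftree.image
        (fun e => if lvl E r (Sum.inl e.1) < lvl E r (Sum.inr e.2)
          then (Sum.inr e.2 : Fin n ⊕ Fin n) else Sum.inl e.1) := by
      intro w hw
      obtain ⟨hwr, hwT⟩ := Finset.mem_erase.mp hw
      rw [hTdef, mem_union] at hwT
      have key : ∀ (g : ℕ → Fin n ⊕ Fin n), (∀ m ≤ i, g m ∈ lay E r m) →
          (∀ m < i, adj E (g m) (g (m+1))) → g 0 = r →
          w ∈ (Finset.range (i+1)).image g →
          (((Finset.range i).image fun m => toPair (g m) (g (m+1)))).Nonempty →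
          ∃ e ∈ ((Finset.range i).image fun m => toPair (g m) (g (m+1))),
            (if lvl E r (Sum.inl e.1) < lvl E r (Sum.inr e.2)
              then (Sum.inr e.2 : Fin n ⊕ Fin n) else Sum.inl e.1) = w := by
        intro g hglay hgadj hg0 hmem _
        rw [Finset.mem_image] at hmem
        obtain ⟨m, hm, rfl⟩ := hmem
        rw [Finset.mem_range] at hm
        obtain ⟨k, rfl⟩ : ∃ k, m = k + 1 := by
          refine ⟨m - 1, ?_⟩
          rcases Nat.eq_zero_or_pos m with h | h
          · exact absurd (h ▸ hg0) hwr
          · omega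
        refine ⟨toPair (g k) (g (k+1)),
          Finset.mem_image.mpr ⟨k, Finset.mem_range.mpr (by omega), rfl⟩, ?_⟩
        have hadjk := hgadj k (by omega)
        have hl1 : lvl E r (g k) = k := lvl_eq (hglay k (by omega))
        have hl2 : lvl E r (g (k+1)) = k + 1 := lvl_eq (hglay (k+1) (by omega))
        rcases toPair_ends hadjk with ⟨ha, hb⟩ | ⟨ha, hb⟩
        · rw [ha, hb, hl1, hl2, if_pos (by omega)]
        · rw [ha, hb, hl2, hl1, if_neg (by omega)]
      rcases hwT with hmem | hmem
      · obtain ⟨e, he, heq⟩ := key f hflay hfadj hr0 hmem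
          ⟨toPair (f 0) (f 1), Finset.mem_image.mpr ⟨0, Finset.mem_range.mpr (by omega), rfl⟩⟩
        exact Finset.mem_image.mpr ⟨e, by rw [hFtdef]; exact mem_union_left _ he, heq⟩
      · have hr0' : f' 0 = r := by
          have := hflay' 0 (by omega)
          simpa [lay] using this
        obtain ⟨e, he, heq⟩ := key f' hflay' hfadj' hr0' hmem
          ⟨toPair (f' 0) (f' 1), Finset.mem_image.mpr ⟨0, Finset.mem_range.mpr (by omega), rfl⟩⟩
        exact Finset.mem_image.mpr ⟨e, by rw [hFtdef]; exact mem_union_right _ he, heq⟩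
    have hFtcard : T.card ≤ Ftree.card + 1 := by
      have h1 : (T.erase r).card = T.card - 1 := Finset.card_erase_of_mem hrT
      have h2 := (card_le_card hsurj).trans Finset.card_image_le
      have h3 : 1 ≤ T.card := Finset.card_pos.mpr ⟨r, hrT⟩
      omega
    have hstep1 : (insert (toPair u' v) Ftree).card = Ftree.card + 1 :=
      card_insert_of_notMem (hnew u' huadj')
    have hstep2 : toPair u v ∉ insert (toPair u' v) Ftree := by
      rw [mem_insert]; push_neg; exact ⟨hne2, hnew u huadj⟩
    have hFcard : Ftree.card + 2 ≤ F.card := by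
      rw [hFdef, card_insert_of_notMem hstep2, hstep1]
    have hSF : S.card ≤ F.card := by
      rw [hScard]
      exact le_trans (Nat.add_le_add_right hFtcard 1) hFcard
    -- membership helpers
    have hTS : T ⊆ S := by rw [hSdef]; exact subset_insert _ _
    have hvS : v ∈ S := by rw [hSdef]; exact mem_insert_self _ _
    have huT : u ∈ T := by
      rw [hTdef]
      exact mem_union_left _ (Finset.mem_image.mpr ⟨i, Finset.mem_range.mpr (by omega), hfi⟩)
    have huT' : u' ∈ T := by
      rw [hTdef]
      exact mem_union_right _ (Finset.mem_image.mpr ⟨i, Finset.mem_range.mpr (by omega), hfi'⟩)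
    have hFuv : toPair u v ∈ F := by rw [hFdef]; exact mem_insert_self _ _
    have hFuv' : toPair u' v ∈ F := by
      rw [hFdef]; exact mem_insert_of_mem (mem_insert_self _ _)
    have hFtF : Ftree ⊆ F := by
      rw [hFdef]
      exact fun e he => mem_insert_of_mem (mem_insert_of_mem he)
    have hr0' : f' 0 = r := by
      have := hflay' 0 (by omega)
      simpa [lay] using this
    -- parity of layers
    have hparity : ∀ (w : Fin n ⊕ Fin n) (m : ℕ), w ∈ lay E r m →
        (w.isLeft = true → m % 2 = 0) ∧ (w.isLeft = false → m % 2 = 1) := by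
      intro w m hw
      have h := lay_side hr hw
      constructor
      · intro hl
        rw [hl] at h
        exact Nat.even_iff.mp (of_decide_eq_true h.symm)
      · intro hl
        rw [hl] at h
        have hne : ¬ Even m := of_decide_eq_false h.symm
        rw [Nat.even_iff] at hne
        omega
    -- F lives on S × S
    have hends : ∀ e ∈ F, Sum.inl e.1 ∈ S ∧ Sum.inr e.2 ∈ S := by
      intro e he
      rw [hFdef, mem_insert, mem_insert] at he
      rcases he with rfl | rfl | he
      · rcases toPair_ends huadj with ⟨ha, hb⟩ | ⟨ha, hb⟩
        · rw [ha, hb]; exact ⟨hTS huT, hvS⟩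
        · rw [ha, hb]; exact ⟨hvS, hTS huT⟩
      · rcases toPair_ends huadj' with ⟨ha, hb⟩ | ⟨ha, hb⟩
        · rw [ha, hb]; exact ⟨hTS huT', hvS⟩
        · rw [ha, hb]; exact ⟨hvS, hTS huT'⟩
      · have := hFtreeEnds e he
        exact ⟨hTS this.1.1, hTS this.2.1⟩
    have hFprod : F ⊆ SL ×ˢ SR := by
      intro e he
      rw [mem_product, hSLdef, hSRdef, mem_filter, mem_filter]
      exact ⟨⟨mem_univ _, (hends e he).1⟩, ⟨mem_univ _, (hends e he).2⟩⟩
    -- every vertex of S is the end of an edge of F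
    have hSend : ∀ w ∈ S, ∃ e ∈ F, Sum.inl e.1 = w ∨ Sum.inr e.2 = w := by
      intro w hw
      rw [hSdef, mem_insert] at hw
      rcases hw with rfl | hw
      · rcases toPair_ends huadj with ⟨ha, hb⟩ | ⟨ha, hb⟩
        · exact ⟨toPair u w, hFuv, Or.inr hb⟩
        · exact ⟨toPair u w, hFuv, Or.inl ha⟩
      · rw [hTdef, mem_union] at hw
        have key2 : ∀ (g : ℕ → Fin n ⊕ Fin n) (uu : Fin n ⊕ Fin n),
            (∀ m < i, adj E (g m) (g (m+1))) → g i = uu → adj E uu v →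
            toPair uu v ∈ F → (∀ m < i, toPair (g m) (g (m+1)) ∈ F) →
            w ∈ (Finset.range (i+1)).image g →
            ∃ e ∈ F, Sum.inl e.1 = w ∨ Sum.inr e.2 = w := by
          intro g uu hgadj hgi huuadj hFuu hFg hmem
          rw [Finset.mem_image] at hmem
          obtain ⟨m, hm, rfl⟩ := hmem
          rw [Finset.mem_range] at hm
          by_cases hmi : m < i
          · refine ⟨toPair (g m) (g (m+1)), hFg m hmi, ?_⟩
            rcases toPair_ends (hgadj m hmi) with ⟨ha, hb⟩ | ⟨ha, hb⟩
            · exact Or.inl ha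
            · exact Or.inr hb
          · have : m = i := by omega
            subst this
            rw [hgi]
            refine ⟨toPair uu v, hFuu, ?_⟩
            rcases toPair_ends huuadj with ⟨ha, hb⟩ | ⟨ha, hb⟩
            · exact Or.inl ha
            · exact Or.inr hb
        rcases hw with hw | hw
        · refine key2 f u hfadj hfi huadj hFuv ?_ hw
          intro m hm
          have hmem : toPair (f m) (f (m+1)) ∈ Ftree := by
            rw [hFtdef]
            exact mem_union_left _ (Finset.mem_image.mpr ⟨m, Finset.mem_range.mpr hm, rfl⟩)
          exact hFtF hmem
        · refine key2 f' u' hfadj' hfi' huadj' hFuv' ?_ hw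
          intro m hm
          have hmem : toPair (f' m) (f' (m+1)) ∈ Ftree := by
            rw [hFtdef]
            exact mem_union_right _ (Finset.mem_image.mpr ⟨m, Finset.mem_range.mpr hm, rfl⟩)
          exact hFtF hmem
    have hincL : ∀ a ∈ SL, ∃ b, (a, b) ∈ F := by
      intro a ha
      rw [hSLdef, mem_filter] at ha
      obtain ⟨e, heF, hend⟩ := hSend _ ha.2
      rcases hend with h | h
      · refine ⟨e.2, ?_⟩
        have he : e = (a, e.2) := by
          obtain ⟨e1, e2⟩ := e
          simp only [Sum.inl.injEq] at h
          simp [h]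
        rwa [← he]
      · exact absurd h (by simp)
    have hincR : ∀ b ∈ SR, ∃ a, (a, b) ∈ F := by
      intro b hb
      rw [hSRdef, mem_filter] at hb
      obtain ⟨e, heF, hend⟩ := hSend _ hb.2
      rcases hend with h | h
      · exact absurd h (by simp)
      · refine ⟨e.1, ?_⟩
        have he : e = (e.1, b) := by
          obtain ⟨e1, e2⟩ := e
          simp only [Sum.inr.injEq] at h
          simp [h]
        rwa [← he]
    -- cardinalities of the two sides
    have hSLcard : SL.card = (S.filter (fun w => w.isLeft = true)).card := by
      apply Finset.card_bij (fun a _ => Sum.inl a)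
      · intro a ha
        rw [hSLdef, mem_filter] at ha
        exact mem_filter.mpr ⟨ha.2, rfl⟩
      · intro a _ a' _ h
        exact Sum.inl.inj h
      · intro w hw
        rw [mem_filter] at hw
        cases w with
        | inl a => exact ⟨a, by rw [hSLdef, mem_filter]; exact ⟨mem_univ _, hw.1⟩, rfl⟩
        | inr b => simp at hw
    have hSRcard : SR.card = (S.filter (fun w => w.isLeft = false)).card := by
      apply Finset.card_bij (fun b _ => Sum.inr b)
      · intro b hb
        rw [hSRdef, mem_filter] at hb
        exact mem_filter.mpr ⟨hb.2, rfl⟩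
      · intro b _ b' _ h
        exact Sum.inr.inj h
      · intro w hw
        rw [mem_filter] at hw
        cases w with
        | inl a => simp at hw
        | inr b => exact ⟨b, by rw [hSRdef, mem_filter]; exact ⟨mem_univ _, hw.1⟩, rfl⟩
    have hsplit : SL.card + SR.card = S.card := by
      rw [hSLcard, hSRcard]
      have hiso : S.filter (fun w => w.isLeft = false)
          = S.filter (fun w => ¬ (w.isLeft = true)) := by
        ext w
        cases w <;> simp
      rw [hiso]
      exact Finset.card_filter_add_card_filter_not _
    -- the left side has at most p vertices
    have hicoL : ((Finset.Ico 1 (i+1)).filter (fun m => m % 2 = 0)).card = (i+2)/2 - 1 := by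
      have heq : (Finset.Ico 1 (i+1)).filter (fun m => m % 2 = 0)
          = ((Finset.range (i+1)).filter (fun m => m % 2 = 0)).erase 0 := by
        ext x
        simp only [Finset.mem_Ico, mem_filter, Finset.mem_erase, Finset.mem_range]
        omega
      rw [heq, Finset.card_erase_of_mem (by simp), card_range_even]
    have hSLp : SL.card ≤ p := by
      have hsubL : S.filter (fun w => w.isLeft = true) ⊆
          ((Finset.range (i+1)).filter (fun m => m % 2 = 0)).image f ∪
          ((Finset.Ico 1 (i+1)).filter (fun m => m % 2 = 0)).image f' ∪
          (if (i+1) % 2 = 0 then {v} else ∅) := by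
        intro w hw
        rw [mem_filter] at hw
        obtain ⟨hwS, hwL⟩ := hw
        rw [hSdef, mem_insert] at hwS
        rcases hwS with rfl | hwT
        · have hev : (i+1) % 2 = 0 := (hparity w (i+1) hv).1 hwL
          rw [mem_union, if_pos hev]
          exact Or.inr (mem_singleton_self _)
        · rw [hTdef, mem_union] at hwT
          rcases hwT with hmem | hmem
          · rw [Finset.mem_image] at hmem
            obtain ⟨m, hm, rfl⟩ := hmem
            rw [Finset.mem_range] at hm
            have hev : m % 2 = 0 := (hparity _ m (hflay m (by omega))).1 hwL
            exact mem_union_left _ (mem_union_left _ (Finset.mem_image.mpr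
              ⟨m, mem_filter.mpr ⟨Finset.mem_range.mpr hm, hev⟩, rfl⟩))
          · rw [Finset.mem_image] at hmem
            obtain ⟨m, hm, rfl⟩ := hmem
            rw [Finset.mem_range] at hm
            have hev : m % 2 = 0 := (hparity _ m (hflay' m (by omega))).1 hwL
            by_cases hm0 : m = 0
            · subst hm0
              have hff : f' 0 = f 0 := by rw [hr0', hr0]
              rw [hff]
              exact mem_union_left _ (mem_union_left _ (Finset.mem_image.mpr
                ⟨0, mem_filter.mpr ⟨Finset.mem_range.mpr (by omega), by norm_num⟩, rfl⟩))
            · exact mem_union_left _ (mem_union_right _ (Finset.mem_image.mpr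
                ⟨m, mem_filter.mpr ⟨Finset.mem_Ico.mpr ⟨by omega, hm⟩, hev⟩, rfl⟩))
      have hb1 := card_le_card hsubL
      have hb2 := card_union_le (((Finset.range (i+1)).filter (fun m => m % 2 = 0)).image f ∪
          ((Finset.Ico 1 (i+1)).filter (fun m => m % 2 = 0)).image f')
          (if (i+1) % 2 = 0 then ({v} : Finset (Fin n ⊕ Fin n)) else ∅)
      have hb3 := card_union_le (((Finset.range (i+1)).filter (fun m => m % 2 = 0)).image f)
          (((Finset.Ico 1 (i+1)).filter (fun m => m % 2 = 0)).image f')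
      have hb4 : (((Finset.range (i+1)).filter (fun m => m % 2 = 0)).image f).card ≤ (i+2)/2 := by
        refine Finset.card_image_le.trans ?_
        rw [card_range_even]
      have hb5 : (((Finset.Ico 1 (i+1)).filter (fun m => m % 2 = 0)).image f').card
          ≤ (i+2)/2 - 1 := by
        refine Finset.card_image_le.trans ?_
        rw [hicoL]
      rw [hSLcard]
      by_cases hpar : (i+1) % 2 = 0
      · rw [if_pos hpar] at hb1 hb2
        simp only [Finset.card_singleton] at hb2
        omega
      · rw [if_neg hpar] at hb1 hb2
        simp only [Finset.card_empty] at hb2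
        omega
    -- the right side has at most p vertices
    have hSRp : SR.card ≤ p := by
      have hsubR : S.filter (fun w => w.isLeft = false) ⊆
          ((Finset.range (i+1)).filter (fun m => m % 2 = 1)).image f ∪
          ((Finset.range (i+1)).filter (fun m => m % 2 = 1)).image f' ∪
          (if (i+1) % 2 = 1 then {v} else ∅) := by
        intro w hw
        rw [mem_filter] at hw
        obtain ⟨hwS, hwL⟩ := hw
        rw [hSdef, mem_insert] at hwS
        rcases hwS with rfl | hwT
        · have hev : (i+1) % 2 = 1 := (hparity w (i+1) hv).2 hwL
          rw [mem_union, if_pos hev]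
          exact Or.inr (mem_singleton_self _)
        · rw [hTdef, mem_union] at hwT
          rcases hwT with hmem | hmem
          · rw [Finset.mem_image] at hmem
            obtain ⟨m, hm, rfl⟩ := hmem
            rw [Finset.mem_range] at hm
            have hev : m % 2 = 1 := (hparity _ m (hflay m (by omega))).2 hwL
            exact mem_union_left _ (mem_union_left _ (Finset.mem_image.mpr
              ⟨m, mem_filter.mpr ⟨Finset.mem_range.mpr hm, hev⟩, rfl⟩))
          · rw [Finset.mem_image] at hmem
            obtain ⟨m, hm, rfl⟩ := hmem
            rw [Finset.mem_range] at hm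
            have hev : m % 2 = 1 := (hparity _ m (hflay' m (by omega))).2 hwL
            exact mem_union_left _ (mem_union_right _ (Finset.mem_image.mpr
              ⟨m, mem_filter.mpr ⟨Finset.mem_range.mpr hm, hev⟩, rfl⟩))
      have hb1 := card_le_card hsubR
      have hb2 := card_union_le (((Finset.range (i+1)).filter (fun m => m % 2 = 1)).image f ∪
          ((Finset.range (i+1)).filter (fun m => m % 2 = 1)).image f')
          (if (i+1) % 2 = 1 then ({v} : Finset (Fin n ⊕ Fin n)) else ∅)
      have hb3 := card_union_le (((Finset.range (i+1)).filter (fun m => m % 2 = 1)).image f)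
          (((Finset.range (i+1)).filter (fun m => m % 2 = 1)).image f')
      have hb4 : (((Finset.range (i+1)).filter (fun m => m % 2 = 1)).image f).card ≤ (i+1)/2 := by
        refine Finset.card_image_le.trans ?_
        rw [card_range_odd]
      have hb5 : (((Finset.range (i+1)).filter (fun m => m % 2 = 1)).image f').card ≤ (i+1)/2 := by
        refine Finset.card_image_le.trans ?_
        rw [card_range_odd]
      rw [hSRcard]
      by_cases hpar : (i+1) % 2 = 1
      · rw [if_pos hpar] at hb1 hb2
        simp only [Finset.card_singleton] at hb2
        omega
      · rw [if_neg hpar] at hb1 hb2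
        simp only [Finset.card_empty] at hb2
        omega
    -- now grow the structure to an exact p × p box
    have hFne : F.Nonempty := ⟨toPair u v, hFuv⟩
    refine grow hpd hdegL hdegR (2*p - (SL.card + SR.card)) SL SR F hFne
      hFE hFprod hincL hincR hSLp hSRp (by omega) ?_
    rw [hsplit]
    exact hSF

end Chunk5b
section Chunk6
variable {n : ℕ}

lemma mindeg {d : ℕ} : ∀ (m : ℕ) (L R : Finset (Fin n)) (E0 : Finset (Fin n × Fin n)),
    L.card + R.card ≤ m → E0 ⊆ L ×ˢ R → d * (L.card + R.card) < E0.card →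
    ∃ E' : Finset (Fin n × Fin n), E' ⊆ E0 ∧ E'.Nonempty ∧
      (∀ a b, (a, b) ∈ E' → d + 1 ≤ (E'.filter fun e => e.1 = a).card ∧
        d + 1 ≤ (E'.filter fun e => e.2 = b).card) := by
  intro m
  induction m with
  | zero =>
    intro L R E0 hm hsub hlt
    exfalso
    have hL : L = ∅ := Finset.card_eq_zero.mp (by omega)
    have hE : E0 = ∅ := by
      rw [eq_empty_iff_forall_notMem]
      intro e he
      have := mem_product.mp (hsub he)
      rw [hL] at this
      exact absurd this.1 (notMem_empty _)
    rw [hE] at hlt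
    simp at hlt
  | succ m ih =>
    intro L R E0 hm hsub hlt
    by_cases hL : ∃ a ∈ L, (E0.filter fun e => e.1 = a).card ≤ d
    · obtain ⟨a, haL, hdeg⟩ := hL
      have hLc : 1 ≤ L.card := Finset.card_pos.mpr ⟨a, haL⟩
      have hcnt : (E0.filter fun e => e.1 = a).card
          + (E0.filter fun e => ¬ (e.1 = a)).card = E0.card :=
        Finset.card_filter_add_card_filter_not _
      have herase : (L.erase a).card = L.card - 1 := Finset.card_erase_of_mem haL
      have hrw : d * (L.card + R.card) = d * ((L.erase a).card + R.card) + d := by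
        rw [herase, ← Nat.mul_succ]
        congr 1
        omega
      have hsub' : (E0.filter fun e => ¬ (e.1 = a)) ⊆ (L.erase a) ×ˢ R := by
        intro e he
        rw [mem_filter] at he
        have := mem_product.mp (hsub he.1)
        exact mem_product.mpr ⟨Finset.mem_erase.mpr ⟨he.2, this.1⟩, this.2⟩
      obtain ⟨E', h1, h2, h3⟩ := ih (L.erase a) R _ (by omega) hsub' (by omega)
      exact ⟨E', h1.trans (Finset.filter_subset _ _), h2, h3⟩
    · by_cases hR : ∃ b ∈ R, (E0.filter fun e => e.2 = b).card ≤ d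
      · obtain ⟨b, hbR, hdeg⟩ := hR
        have hRc : 1 ≤ R.card := Finset.card_pos.mpr ⟨b, hbR⟩
        have hcnt : (E0.filter fun e => e.2 = b).card
            + (E0.filter fun e => ¬ (e.2 = b)).card = E0.card :=
          Finset.card_filter_add_card_filter_not _
        have herase : (R.erase b).card = R.card - 1 := Finset.card_erase_of_mem hbR
        have hrw : d * (L.card + R.card) = d * (L.card + (R.erase b).card) + d := by
          rw [herase, ← Nat.mul_succ]
          congr 1
          omega
        have hsub' : (E0.filter fun e => ¬ (e.2 = b)) ⊆ L ×ˢ (R.erase b) := by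
          intro e he
          rw [mem_filter] at he
          have := mem_product.mp (hsub he.1)
          exact mem_product.mpr ⟨this.1, Finset.mem_erase.mpr ⟨he.2, this.2⟩⟩
        obtain ⟨E', h1, h2, h3⟩ := ih L (R.erase b) _ (by omega) hsub' (by omega)
        exact ⟨E', h1.trans (Finset.filter_subset _ _), h2, h3⟩
      · push_neg at hL hR
        refine ⟨E0, subset_rfl, Finset.card_pos.mp (by omega), ?_⟩
        intro a b hab
        have hmem := mem_product.mp (hsub hab)
        exact ⟨hL a hmem.1, hR b hmem.2⟩

end Chunk6
end EGBip

/-- `rBip n s t q` is the bipartite Erdős–Gyárfás function `r(K_{n,n}, K_{s,t}, q)`: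
the minimum number of colors in an edge-coloring of `K_{n,n}` such that every copy of
`K_{s,t}` (with its part of size `s` in either side of the bipartition) receives at
least `q` distinct colors on its edges. -/
noncomputable def rBip (n s t q : ℕ) : ℕ :=
  sInf {k : ℕ | ∃ c : Fin n → Fin n → ℕ,
    (∀ a b, c a b < k) ∧
    ∀ A B : Finset (Fin n),
      (A.card = s ∧ B.card = t) ∨ (A.card = t ∧ B.card = s) →
      q ≤ ((A ×ˢ B).image fun p => c p.1 p.2).card}

/-- For `p ≥ 2`, `r(K_{n,n}, K_{p,p}, p² - 2p + 2) = Ω(n^{1 - 1/p})`. -/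
theorem stmt_15 (p : ℕ) (hp : 2 ≤ p) :
    ∃ c : ℝ, 0 < c ∧ ∃ n₀ : ℕ, ∀ n : ℕ, n₀ ≤ n →
      c * (n : ℝ) ^ ((1 : ℝ) - 1 / (p : ℝ)) ≤
        (rBip n p p (p ^ 2 - 2 * p + 2) : ℝ) := by
  classical
  refine ⟨1/6, by norm_num, (p+1)^p, ?_⟩
  intro n hn
  have hp0 : 0 < p := by omega
  have hpR : (0:ℝ) < p := by exact_mod_cast hp0
  have hn1 : 1 ≤ n := le_trans (Nat.one_le_pow _ _ (by omega)) hn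
  set q : ℕ := p ^ 2 - 2 * p + 2 with hqdef
  set m : ℕ := Nat.ceil (((2 * n : ℕ) : ℝ) ^ ((1:ℝ)/(p:ℝ))) with hmdef
  set d : ℕ := p + m with hddef
  have hpd : p ≤ d := by omega
  -- `2n < d^p`
  have hcast : ((2*n : ℕ):ℝ) = (((2*n:ℕ):ℝ) ^ ((1:ℝ)/(p:ℝ))) ^ (p:ℕ) := by
    rw [← Real.rpow_natCast (((2*n:ℕ):ℝ) ^ ((1:ℝ)/(p:ℝ))) p,
      ← Real.rpow_mul (by positivity), one_div,
      inv_mul_cancel₀ (ne_of_gt hpR), Real.rpow_one]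
  have hmp : ((2*n:ℕ):ℝ) ≤ ((m:ℕ):ℝ) ^ (p:ℕ) := by
    rw [hcast]
    exact pow_le_pow_left₀ (by positivity) (Nat.le_ceil _) p
  have h2n : 2 * n < d ^ p := by
    have h1 : 2*n ≤ m ^ p := by exact_mod_cast hmp
    have h2 : m ^ p < d ^ p := Nat.pow_lt_pow_left (by omega) (by omega)
    omega
  set Sset : Set ℕ := {k : ℕ | ∃ cc : Fin n → Fin n → ℕ,
    (∀ a b, cc a b < k) ∧
    ∀ A B : Finset (Fin n),
      (A.card = p ∧ B.card = p) ∨ (A.card = p ∧ B.card = p) →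
      q ≤ ((A ×ˢ B).image fun e => cc e.1 e.2).card} with hSsetdef
  have hrBip : rBip n p p q = sInf Sset := rfl
  have hsq : p^2 = p*p := pow_two p
  have h2p : 2*p ≤ p*p := Nat.mul_le_mul_right p hp
  have hq2 : q = p*p - 2*p + 2 := by rw [hqdef, pow_two]
  -- every admissible number of colors is at least n / (2d)
  have hkey : ∀ k ∈ Sset, n ≤ 2*d*k := by
    intro k hk
    obtain ⟨cc, hcc, hprop⟩ := hk
    by_contra hcon
    push_neg at hcon
    -- find a popular color class
    have hcards : ∑ col ∈ Finset.range k,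
        ((univ : Finset (Fin n × Fin n)).filter fun e => cc e.1 e.2 = col).card = n * n := by
      have h := Finset.card_eq_sum_card_fiberwise
        (f := fun e : Fin n × Fin n => cc e.1 e.2) (s := univ) (t := Finset.range k)
        (fun e _ => Finset.mem_range.mpr (hcc e.1 e.2))
      rw [← h, Finset.card_univ, Fintype.card_prod, Fintype.card_fin]
    have hfib : ∃ col ∈ Finset.range k,
        2*d*n < ((univ : Finset (Fin n × Fin n)).filter fun e => cc e.1 e.2 = col).card := by
      by_contra hcon2
      push_neg at hcon2
      have hle := Finset.sum_le_card_nsmul (Finset.range k) _ (2*d*n)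
        (fun col hcol => hcon2 col hcol)
      rw [Finset.card_range, smul_eq_mul, hcards] at hle
      have h1 : k * (2*d*n) = (2*d*k)*n := by ring
      have h2 : (2*d*k)*n ≤ (n-1)*n := Nat.mul_le_mul_right n (by omega)
      have h3 : (n-1)*n < n*n := mul_lt_mul_of_pos_right (by omega) (by omega)
      omega
    obtain ⟨col, hcolk, hcol⟩ := hfib
    set E0 : Finset (Fin n × Fin n) :=
      (univ : Finset (Fin n × Fin n)).filter (fun e => cc e.1 e.2 = col) with hE0def
    have hprodE0 : E0 ⊆ (univ : Finset (Fin n)) ×ˢ univ :=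
      fun e _ => mem_product.mpr ⟨mem_univ _, mem_univ _⟩
    have hltE0 : d * ((univ : Finset (Fin n)).card + (univ : Finset (Fin n)).card)
        < E0.card := by
      rw [Finset.card_univ, Fintype.card_fin]
      calc d*(n+n) = 2*d*n := by ring
        _ < E0.card := hcol
    obtain ⟨E', hE'sub, hE'ne, hE'deg⟩ := EGBip.mindeg (n + n) univ univ E0
      (le_of_eq (by rw [Finset.card_univ, Fintype.card_fin])) hprodE0 hltE0
    obtain ⟨A, B, F, hA, hB, hFE', hFAB, hFc⟩ := EGBip.exists_box hp hpd hE'ne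
      (fun a b h => (hE'deg a b h).1) (fun a b h => (hE'deg a b h).2) h2n
    obtain ⟨M, hMF, hMc⟩ := Finset.exists_subset_card_eq hFc
    have hMcol : ∀ e ∈ M, cc e.1 e.2 = col := by
      intro e he
      have := hE'sub (hFE' (hMF he))
      rw [hE0def, Finset.mem_filter] at this
      exact this.2
    have hMAB : M ⊆ A ×ˢ B := fun e he => hFAB (hMF he)
    have himg : ((A ×ˢ B).image fun e => cc e.1 e.2) ⊆
        insert col (((A ×ˢ B) \ M).image fun e => cc e.1 e.2) := by
      intro x hx
      rw [Finset.mem_image] at hx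
      obtain ⟨e, he, rfl⟩ := hx
      by_cases heM : e ∈ M
      · rw [hMcol e heM]; exact mem_insert_self _ _
      · exact mem_insert_of_mem (Finset.mem_image.mpr ⟨e, Finset.mem_sdiff.mpr ⟨he, heM⟩, rfl⟩)
    have hcount : ((A ×ˢ B).image fun e => cc e.1 e.2).card ≤ p*p - 2*p + 1 := by
      calc ((A ×ˢ B).image fun e => cc e.1 e.2).card
          ≤ (insert col (((A ×ˢ B) \ M).image fun e => cc e.1 e.2)).card :=
            card_le_card himg
        _ ≤ (((A ×ˢ B) \ M).image fun e => cc e.1 e.2).card + 1 := card_insert_le _ _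
        _ ≤ ((A ×ˢ B) \ M).card + 1 := by
            exact Nat.add_le_add_right Finset.card_image_le 1
        _ = p*p - 2*p + 1 := by
            rw [Finset.card_sdiff_of_subset hMAB, Finset.card_product, hA, hB, hMc]
    have hq := hprop A B (Or.inl ⟨hA, hB⟩)
    omega
  -- the defining set is nonempty
  have hSne : Sset.Nonempty := by
    refine ⟨n*n, fun a b => n * a.val + b.val, ?_, ?_⟩
    · intro a b
      have hb := b.isLt
      have ha := a.isLt
      calc n * a.val + b.val < n * a.val + n := by omega
        _ = n * (a.val + 1) := by ring
        _ ≤ n * n := Nat.mul_le_mul_left n ha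
    · intro A B hAB
      have hA : A.card = p ∧ B.card = p := by rcases hAB with h | h <;> exact h
      have hinj : Set.InjOn (fun e : Fin n × Fin n => n * e.1.val + e.2.val)
          ↑(A ×ˢ B) := by
        intro e _ e' _ h
        simp only at h
        have hb : e.2.val = e'.2.val := by
          have h1 : (n * e.1.val + e.2.val) % n = e.2.val := by
            rw [Nat.mul_add_mod, Nat.mod_eq_of_lt e.2.isLt]
          have h2 : (n * e'.1.val + e'.2.val) % n = e'.2.val := by
            rw [Nat.mul_add_mod, Nat.mod_eq_of_lt e'.2.isLt]
          rw [← h1, ← h2, h]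
        have ha : e.1.val = e'.1.val := by
          have hmul : n * e.1.val = n * e'.1.val := by omega
          exact Nat.eq_of_mul_eq_mul_left (by omega) hmul
        exact Prod.ext (Fin.ext ha) (Fin.ext hb)
      rw [Finset.card_image_of_injOn hinj, Finset.card_product, hA.1, hA.2]
      omega
  have hmem : rBip n p p q ∈ Sset := by rw [hrBip]; exact Nat.sInf_mem hSne
  have hnk : n ≤ 2*d*(rBip n p p q) := hkey _ hmem
  -- real arithmetic
  set k : ℕ := rBip n p p q with hkdef
  have hnkR : (n:ℝ) ≤ 2*(d:ℝ)*(k:ℝ) := by exact_mod_cast hnk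
  have hnpos : (0:ℝ) < n := by exact_mod_cast hn1
  have hX : (0:ℝ) < (n:ℝ) ^ ((1:ℝ)/(p:ℝ)) := Real.rpow_pos_of_pos hnpos _
  have hdR : (d:ℝ) ≤ 3 * (n:ℝ) ^ ((1:ℝ)/(p:ℝ)) := by
    have hm1 : (m:ℝ) < ((2*n:ℕ):ℝ) ^ ((1:ℝ)/(p:ℝ)) + 1 := by
      rw [hmdef]
      exact Nat.ceil_lt_add_one (by positivity)
    have h2 : ((2*n:ℕ):ℝ) ^ ((1:ℝ)/(p:ℝ)) ≤ 2 * (n:ℝ) ^ ((1:ℝ)/(p:ℝ)) := by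
      have hcast2 : ((2*n:ℕ):ℝ) = 2 * (n:ℝ) := by push_cast; ring
      rw [hcast2, Real.mul_rpow (by norm_num) (by positivity)]
      have h21 : (2:ℝ) ^ ((1:ℝ)/(p:ℝ)) ≤ 2 := by
        calc (2:ℝ) ^ ((1:ℝ)/(p:ℝ)) ≤ 2 ^ (1:ℝ) := by
              apply Real.rpow_le_rpow_of_exponent_le (by norm_num)
              rw [div_le_one hpR]
              exact_mod_cast (by omega : 1 ≤ p)
          _ = 2 := Real.rpow_one 2
      exact mul_le_mul_of_nonneg_right h21 (le_of_lt hX)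
    have h3 : (p:ℝ) + 1 ≤ (n:ℝ) ^ ((1:ℝ)/(p:ℝ)) := by
      have hcast3 : ((p:ℝ)+1) = (((p:ℝ)+1) ^ (p:ℕ)) ^ ((1:ℝ)/(p:ℝ)) := by
        rw [← Real.rpow_natCast ((p:ℝ)+1) p, ← Real.rpow_mul (by positivity),
          mul_one_div, div_self (ne_of_gt hpR), Real.rpow_one]
      rw [hcast3]
      apply Real.rpow_le_rpow (by positivity) ?_ (by positivity)
      have : (((p+1)^p : ℕ) : ℝ) ≤ (n:ℝ) := by exact_mod_cast hn
      push_cast at this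
      exact this
    have hdcast : (d:ℝ) = (p:ℝ) + (m:ℝ) := by rw [hddef]; push_cast; ring
    linarith
  have hYX : (n:ℝ) ^ ((1:ℝ) - 1/(p:ℝ)) * (n:ℝ) ^ ((1:ℝ)/(p:ℝ)) = n := by
    rw [← Real.rpow_add hnpos]
    have : (1:ℝ) - 1/(p:ℝ) + 1/(p:ℝ) = 1 := by ring
    rw [this, Real.rpow_one]
  have hk0 : (0:ℝ) ≤ k := Nat.cast_nonneg k
  have h6 : (n:ℝ) ^ ((1:ℝ) - 1/(p:ℝ)) ≤ 6 * k := by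
    have h1 : (n:ℝ) ^ ((1:ℝ) - 1/(p:ℝ)) * (n:ℝ) ^ ((1:ℝ)/(p:ℝ))
        ≤ (6*(k:ℝ)) * (n:ℝ) ^ ((1:ℝ)/(p:ℝ)) := by
      rw [hYX]
      nlinarith [hnkR, hdR, hk0, hX]
    exact le_of_mul_le_mul_right h1 hX
  linarith
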